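/- Let τ ∈ (0,1), ε₁,…,ε_N ∈ ℝ, x₁,…,x_N ∈ ℝ^p, and let D be a p×p invertible matrix. Define V_π = ∑_{i=1}^N (τ − I(ε_i<0))² x_i x_iᵀ / (N² π_i). Then tr(D^{-1} V_π D^{-1}) ≥ N^{-2}(∑_{i=1}^N |τ − I(ε_i<0)|·‖D^{-1}x_i‖)² for any positive probability vector π, with equality when π_i ∝ |τ − I(ε_i<0)|·‖D^{-1}x_i‖. -/

import Mathlib

open Finset Matrix

private lemma trace_sandwich (p : ℕ) (M : Matrix (Fin p) (Fin p) ℝ) (hM : Mᵀ = M)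
    (v : Fin p → ℝ) :
    (M * Matrix.of (fun j k => v j * v k) * M).trace = ∑ j, (M *ᵥ v) j ^ 2 := by
  have hM' : ∀ a b, M a b = M b a := fun a b => by
    conv_lhs => rw [← hM, Matrix.transpose_apply]
  simp only [Matrix.trace, Matrix.diag, Matrix.mul_apply, Matrix.mulVec, dotProduct,
    Matrix.of_apply, Finset.sum_mul, Finset.mul_sum, pow_two]
  refine Finset.sum_congr rfl fun j _ => ?_
  rw [Finset.sum_comm]
  refine Finset.sum_congr rfl fun l _ => Finset.sum_congr rfl fun k _ => ?_
  rw [hM' k j]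
  ring

theorem A_optimality (N p : ℕ) (τ : ℝ) (hτ : τ ∈ Set.Ioo (0:ℝ) 1)
    (ε : Fin N → ℝ) (x : Fin N → Fin p → ℝ)
    (D : Matrix (Fin p) (Fin p) ℝ) (hD : D.PosDef)
    (nrmD : Fin N → ℝ)
    (hnrmD : ∀ i, nrmD i = ‖(WithLp.equiv 2 (Fin p → ℝ)).symm (D⁻¹ *ᵥ x i)‖)
    (a : Fin N → ℝ)
    (ha : ∀ i, a i = τ - (if ε i < 0 then (1:ℝ) else 0))
    (V : (Fin N → ℝ) → Matrix (Fin p) (Fin p) ℝ)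
    (hV : ∀ π, V π = ∑ i, ((a i) ^ 2 / ((N:ℝ) ^ 2 * π i)) •
        Matrix.of (fun j k => x i j * x i k)) :
    (∀ π : Fin N → ℝ, (∀ i, 0 < π i) → (∑ i, π i = 1) →
        ((N:ℝ))⁻¹ ^ 2 * (∑ i, |a i| * nrmD i) ^ 2 ≤ (D⁻¹ * V π * D⁻¹).trace) ∧
    ((0 < ∑ j, |a j| * nrmD j) →
      (D⁻¹ * V (fun i => |a i| * nrmD i / ∑ j, |a j| * nrmD j) * D⁻¹).trace =
        ((N:ℝ))⁻¹ ^ 2 * (∑ i, |a i| * nrmD i) ^ 2) := by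
  have hsym : (D⁻¹)ᵀ = D⁻¹ := by
    have := hD.isHermitian.inv.eq
    simpa [Matrix.conjTranspose_eq_transpose_of_trivial] using this
  have hnrm2 : ∀ i, nrmD i ^ 2 = ∑ j, (D⁻¹ *ᵥ x i) j ^ 2 := by
    intro i
    rw [hnrmD i, EuclideanSpace.norm_eq, Real.sq_sqrt (by positivity)]
    simp [Real.norm_eq_abs, sq_abs]
  have htr : ∀ π : Fin N → ℝ, (D⁻¹ * V π * D⁻¹).trace
      = ∑ i, a i ^ 2 / ((N:ℝ) ^ 2 * π i) * nrmD i ^ 2 := by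
    intro π
    rw [hV, Matrix.mul_sum, Matrix.sum_mul, Matrix.trace_sum]
    refine Finset.sum_congr rfl fun i _ => ?_
    rw [Matrix.mul_smul, Matrix.smul_mul, Matrix.trace_smul, smul_eq_mul,
      trace_sandwich p (D⁻¹) hsym (x i), hnrm2 i]
  have hnn : ∀ i, 0 ≤ nrmD i := fun i => by rw [hnrmD i]; exact norm_nonneg _
  constructor
  · intro π hπ hπ1
    rw [htr]
    have key : (∑ i, |a i| * nrmD i) ^ 2 ≤ ∑ i, a i ^ 2 * nrmD i ^ 2 / π i := by
      have cs := Finset.sum_mul_sq_le_sq_mul_sq Finset.univ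
        (fun i => Real.sqrt (π i)) (fun i => |a i| * nrmD i / Real.sqrt (π i))
      have h1 : ∀ i : Fin N, Real.sqrt (π i) * (|a i| * nrmD i / Real.sqrt (π i))
          = |a i| * nrmD i := fun i =>
        by rw [mul_comm, div_mul_cancel₀ _ (ne_of_gt (Real.sqrt_pos.2 (hπ i)))]
      have h2 : ∀ i : Fin N, (Real.sqrt (π i)) ^ 2 = π i := fun i =>
        Real.sq_sqrt (hπ i).le
      have h3 : ∀ i : Fin N, (|a i| * nrmD i / Real.sqrt (π i)) ^ 2
          = a i ^ 2 * nrmD i ^ 2 / π i := fun i => by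
        rw [div_pow, h2, mul_pow, sq_abs]
      calc (∑ i, |a i| * nrmD i) ^ 2
          = (∑ i, Real.sqrt (π i) * (|a i| * nrmD i / Real.sqrt (π i))) ^ 2 := by
            rw [Finset.sum_congr rfl fun i _ => (h1 i)]
        _ ≤ (∑ i, (Real.sqrt (π i)) ^ 2) * ∑ i, (|a i| * nrmD i / Real.sqrt (π i)) ^ 2 := cs
        _ = ∑ i, a i ^ 2 * nrmD i ^ 2 / π i := by
            rw [Finset.sum_congr rfl fun i _ => (h2 i),
              Finset.sum_congr rfl fun i _ => (h3 i), hπ1, one_mul]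
    calc ((N:ℝ))⁻¹ ^ 2 * (∑ i, |a i| * nrmD i) ^ 2
        ≤ ((N:ℝ))⁻¹ ^ 2 * ∑ i, a i ^ 2 * nrmD i ^ 2 / π i :=
          mul_le_mul_of_nonneg_left key (by positivity)
      _ = ∑ i, a i ^ 2 / ((N:ℝ) ^ 2 * π i) * nrmD i ^ 2 := by
          rw [Finset.mul_sum]
          exact Finset.sum_congr rfl fun i _ => by ring
  · intro hS
    set S := ∑ j, |a j| * nrmD j with hSdef
    rw [htr]
    have hterm : ∀ i : Fin N, a i ^ 2 / ((N:ℝ) ^ 2 * (|a i| * nrmD i / S)) * nrmD i ^ 2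
        = (((N:ℝ))⁻¹ ^ 2 * S) * (|a i| * nrmD i) := by
      intro i
      have hai : a i ≠ 0 := by
        rw [ha i]; rcases hτ with ⟨h0, h1⟩
        split <;> intro h <;> nlinarith
      by_cases hz : nrmD i = 0
      · simp [hz]
      by_cases hN : (N:ℝ) = 0
      · simp [hN]
      rw [← sq_abs (a i)]
      have haa : |a i| ≠ 0 := abs_ne_zero.2 hai
      field_simp
    rw [Finset.sum_congr rfl fun i _ => hterm i, ← Finset.mul_sum, ← hSdef]
    ring
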